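/- Regret bound for the fixed-share rule with specialized experts: under convex losses with ℓ_t(δ_i) ∈ [0,L] for active i, for every m ∈ {0,…,T-1} and every legal compound expert j_1^T with at most m switches, Σ_{t=1}^T (ℓ_t(p_t) - ℓ_t(δ_{j_t})) ≤ ((m+1)/η) ln N + (1/η) ln(1/(α^m (1-α)^{T-m-1})) + (η/8) L² T. -/

import Mathlib

set_option maxHeartbeats 1000000

open Real Finset

/-- The Dirac mass on expert `j`, viewed as a convex weight vector. -/
noncomputable def dirac {N : ℕ} (j : Fin N) : Fin N → ℝ := fun i => if i = j then 1 else 0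


lemma hoeff_scalar (p : ℝ) (hp0 : 0 ≤ p) (hp1 : p ≤ 1) :
    ∀ v : ℝ, 0 ≤ v → Real.log (1 - p + p * Real.exp (-v)) ≤ -(p * v) + v ^ 2 / 8 := by
  have hD : ∀ x : ℝ, 0 < 1 - p + p * Real.exp (-x) := by
    intro x
    nlinarith [Real.exp_pos (-x), mul_nonneg hp0 (Real.exp_pos (-x)).le,
      mul_nonneg (sub_nonneg.2 hp1) (Real.exp_pos (-x)).le]
  set D : ℝ → ℝ := fun x => 1 - p + p * Real.exp (-x) with hDdef
  have hDder : ∀ x : ℝ, HasDerivAt D (-(p * Real.exp (-x))) x := by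
    intro x
    have h1 : HasDerivAt (fun x : ℝ => Real.exp (-x)) (-Real.exp (-x)) x := by
      simpa [Function.comp_def] using (Real.hasDerivAt_exp (-x)).comp x (hasDerivAt_neg x)
    have := ((h1.const_mul p).const_add (1 - p))
    exact this.congr_deriv (by ring)
  set g1 : ℝ → ℝ := fun x => -p + x / 4 + p * Real.exp (-x) / D x with hg1def
  set g : ℝ → ℝ := fun x => -(p * x) + x ^ 2 / 8 - Real.log (D x) with hgdef
  have hgder : ∀ x : ℝ, HasDerivAt g (g1 x) x := by
    intro x
    have hlog : HasDerivAt (fun x => Real.log (D x)) ((-(p * Real.exp (-x))) / D x) x := by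
      exact ((Real.hasDerivAt_log (hD x).ne').comp x (hDder x)).congr_deriv (by show _ = -(p * Real.exp (-x)) / (1 - p + p * Real.exp (-x)); ring)
    have h1 : HasDerivAt (fun x : ℝ => -(p * x) + x ^ 2 / 8) (-p + x / 4) x := by
      have := ((hasDerivAt_id x).const_mul p).neg.add
        (((hasDerivAt_pow 2 x)).div_const 8)
      exact this.congr_deriv (by norm_num; ring)
    have := h1.sub hlog
    refine this.congr_deriv ?_
    simp only [hg1def]
    field_simp
    ring
  have hg1der : ∀ x : ℝ, HasDerivAt g1
      (1 / 4 + ((-(p * Real.exp (-x))) * D x - p * Real.exp (-x) * (-(p * Real.exp (-x)))) / (D x) ^ 2) x := by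
    intro x
    have h1 : HasDerivAt (fun x : ℝ => p * Real.exp (-x)) (-(p * Real.exp (-x))) x := by
      have h1 : HasDerivAt (fun x : ℝ => Real.exp (-x)) (-Real.exp (-x)) x := by
        simpa [Function.comp_def] using (Real.hasDerivAt_exp (-x)).comp x (hasDerivAt_neg x)
      simpa [mul_comm, mul_left_comm, mul_assoc] using h1.const_mul p
    have hdiv := h1.div (hDder x) (hD x).ne'
    have hlin : HasDerivAt (fun x : ℝ => -p + x / 4) (1 / 4) x := by
      simpa using ((hasDerivAt_id x).div_const 4).const_add (-p)
    exact hlin.add hdiv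
  have hg1nonneg : ∀ x : ℝ, 0 ≤ 1 / 4 + ((-(p * Real.exp (-x))) * D x - p * Real.exp (-x) * (-(p * Real.exp (-x)))) / (D x) ^ 2 := by
    intro x
    set q : ℝ := p * Real.exp (-x) / D x with hq
    have hDx := hD x
    have hexpand : ((-(p * Real.exp (-x))) * D x - p * Real.exp (-x) * (-(p * Real.exp (-x)))) / (D x) ^ 2
        = -q + q ^ 2 := by
      rw [hq]
      field_simp
      ring
    rw [hexpand]
    nlinarith [sq_nonneg (q - 1 / 2)]
  have hg1mono : Monotone g1 :=
    monotone_of_deriv_nonneg (fun x => (hg1der x).differentiableAt)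
      (fun x => by rw [(hg1der x).deriv]; exact hg1nonneg x)
  have hg10 : g1 0 = 0 := by
    simp only [hg1def, hDdef]
    norm_num
  have hgmono : MonotoneOn g (Set.Ici 0) := by
    apply monotoneOn_of_deriv_nonneg (convex_Ici 0)
    · exact fun x _ => ((hgder x).differentiableAt).continuousAt.continuousWithinAt
    · exact fun x _ => ((hgder x).differentiableAt).differentiableWithinAt
    · intro x hx
      rw [(hgder x).deriv]
      rw [interior_Ici] at hx
      have := hg1mono (le_of_lt hx)
      rw [hg10] at this
      exact this
  have hg0 : g 0 = 0 := by
    simp [hgdef, hDdef]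
  intro v hv
  have := hgmono Set.self_mem_Ici (Set.mem_Ici.2 hv) hv
  rw [hg0] at this
  simp only [hgdef, hDdef] at this
  linarith

lemma hoeff_sum {ι : Type*} (s : Finset ι) (q x : ι → ℝ) (η L : ℝ)
    (hη : 0 ≤ η) (hL : 0 ≤ L)
    (hq0 : ∀ i ∈ s, 0 ≤ q i) (hq1 : ∑ i ∈ s, q i = 1)
    (hx : ∀ i ∈ s, x i ∈ Set.Icc (0 : ℝ) L) :
    Real.log (∑ i ∈ s, q i * Real.exp (-η * x i))
      ≤ -η * (∑ i ∈ s, q i * x i) + η ^ 2 * L ^ 2 / 8 := by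
  rcases eq_or_lt_of_le hL with rfl | hLpos
  · have hx0 : ∀ i ∈ s, x i = 0 := fun i hi => le_antisymm (hx i hi).2 (hx i hi).1
    have h1 : ∑ i ∈ s, q i * Real.exp (-η * x i) = 1 := by
      rw [← hq1]; exact Finset.sum_congr rfl fun i hi => by simp [hx0 i hi]
    have h2 : ∑ i ∈ s, q i * x i = 0 := Finset.sum_eq_zero fun i hi => by simp [hx0 i hi]
    rw [h1, h2, Real.log_one]
    norm_num
  · set μ : ℝ := ∑ i ∈ s, q i * x i with hμ
    have hμ0 : 0 ≤ μ := Finset.sum_nonneg fun i hi => mul_nonneg (hq0 i hi) (hx i hi).1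
    have hμL : μ ≤ L := by
      calc μ ≤ ∑ i ∈ s, q i * L :=
            Finset.sum_le_sum fun i hi => mul_le_mul_of_nonneg_left (hx i hi).2 (hq0 i hi)
        _ = L := by rw [← Finset.sum_mul, hq1, one_mul]
    set c : ℝ := Real.exp (-(η * L)) with hc
    have hpoint : ∀ i ∈ s, Real.exp (-η * x i) ≤ (1 - x i / L) + x i / L * c := by
      intro i hi
      have h1 : (0:ℝ) ≤ 1 - x i / L := by
        rw [sub_nonneg, div_le_one hLpos]; exact (hx i hi).2
      have h2 : (0:ℝ) ≤ x i / L := div_nonneg (hx i hi).1 hLpos.le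
      have h3 : (1 - x i / L) + x i / L = 1 := by ring
      have := convexOn_exp.2 (Set.mem_univ (0:ℝ)) (Set.mem_univ (-(η * L))) h1 h2 h3
      simp only [smul_eq_mul, mul_zero, zero_add, Real.exp_zero, mul_one] at this
      have harg : (x i / L) * (-(η * L)) = -η * x i := by field_simp
      rw [harg] at this
      linarith
    have hsum_le : ∑ i ∈ s, q i * Real.exp (-η * x i) ≤ 1 - μ / L + μ / L * c := by
      calc ∑ i ∈ s, q i * Real.exp (-η * x i)
          ≤ ∑ i ∈ s, q i * ((1 - x i / L) + x i / L * c) :=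
            Finset.sum_le_sum fun i hi =>
              mul_le_mul_of_nonneg_left (hpoint i hi) (hq0 i hi)
        _ = 1 - μ / L + μ / L * c := by
            have : ∀ i ∈ s, q i * ((1 - x i / L) + x i / L * c)
                = q i - q i * x i / L + q i * x i / L * c := by intro i _; ring
            rw [Finset.sum_congr rfl this, Finset.sum_add_distrib, Finset.sum_sub_distrib,
              ← Finset.sum_div, ← Finset.sum_mul, ← Finset.sum_div, hq1, ← hμ]
    have hpos : 0 < ∑ i ∈ s, q i * Real.exp (-η * x i) := by
      obtain ⟨i, hi, hqi⟩ : ∃ i ∈ s, 0 < q i := by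
        by_contra h
        push_neg at h
        have : ∑ i ∈ s, q i = 0 :=
          Finset.sum_eq_zero fun i hi => le_antisymm (h i hi) (hq0 i hi)
        rw [hq1] at this; norm_num at this
      exact Finset.sum_pos' (fun j hj => mul_nonneg (hq0 j hj) (Real.exp_pos _).le)
        ⟨i, hi, mul_pos hqi (Real.exp_pos _)⟩
    have hlog := Real.log_le_log hpos hsum_le
    have hfin := hoeff_scalar (μ / L) (div_nonneg hμ0 hLpos.le)
      ((div_le_one hLpos).2 hμL) (η * L) (mul_nonneg hη hL)
    have he : -(μ / L * (η * L)) = -η * μ := by field_simp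
    calc Real.log (∑ i ∈ s, q i * Real.exp (-η * x i))
        ≤ Real.log (1 - μ / L + μ / L * c) := hlog
      _ ≤ -(μ / L * (η * L)) + (η * L) ^ 2 / 8 := hfin
      _ = -η * μ + η ^ 2 * L ^ 2 / 8 := by rw [he]; ring
lemma dirac_mem_stdSimplex {N : ℕ} (j : Fin N) : dirac j ∈ stdSimplex ℝ (Fin N) := by
  refine ⟨fun i => ?_, ?_⟩
  · simp only [dirac]; split_ifs <;> norm_num
  · simp [dirac, Finset.sum_ite_eq']

/-- Regret bound for the fixed-share rule `F_{η,α}` with specialized experts: under convex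
losses with `ℓ_t(δ_i) ∈ [0, L]` for active `i`, for every `m ∈ {0, …, T-1}` and every legal
compound expert with at most `m` switches,
`Σ_t (ℓ_t(p_t) - ℓ_t(δ_{j_t})) ≤ ((m+1)/η) ln N + (1/η) ln(1/(α^m (1-α)^{T-m-1})) + (η/8) L² T`. -/
theorem fixed_share_regret_bound
    (N T m : ℕ) (hN : 0 < N) (hT : 1 ≤ T) (hm : m ≤ T - 1)
    (η α L : ℝ) (hη : 0 < η) (hα : 0 < α) (hα1 : α < 1) (hL : 0 ≤ L)
    (E : ℕ → Finset (Fin N)) (hE : ∀ t, (E t).Nonempty)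
    (ℓ : ℕ → (Fin N → ℝ) → ℝ)
    (hconv : ∀ t, ConvexOn ℝ (stdSimplex ℝ (Fin N)) (ℓ t))
    (hbound : ∀ t, t < T → ∀ i ∈ E t, ℓ t (dirac i) ∈ Set.Icc (0 : ℝ) L)
    -- the fixed-share rule: weights `w` and predictions `p`
    (w : ℕ → Fin N → ℝ)
    (hw0 : ∀ i, w 0 i = if i ∈ E 0 then (1 : ℝ) / (E 0).card else 0)
    (hupd : ∀ t j, w (t + 1) j =
      if j ∈ E (t + 1) then
        (1 / ((E (t + 1)).card : ℝ)) *
            (∑ i ∈ E t \ E (t + 1), w t i * Real.exp (-η * ℓ t (dirac i)))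
          + (α / ((E (t + 1)).card : ℝ)) *
              (∑ i ∈ E t ∩ E (t + 1), w t i * Real.exp (-η * ℓ t (dirac i)))
          + (1 - α) *
              (if j ∈ E t ∩ E (t + 1) then w t j * Real.exp (-η * ℓ t (dirac j)) else 0)
      else 0)
    (hpos : ∀ t, 0 < ∑ k ∈ E t, w t k)
    (p : ℕ → Fin N → ℝ)
    (hp : ∀ t i, p t i = (if i ∈ E t then w t i else 0) / ∑ k ∈ E t, w t k)
    -- a legal compound expert with at most `m` switches
    (σ : ℕ → Fin N)
    (hleg : ∀ t, t < T → σ t ∈ E t)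
    (hsw : ((Finset.Ico 1 T).filter fun t => σ (t - 1) ≠ σ t).card ≤ m) :
    ∑ t ∈ Finset.range T, (ℓ t (p t) - ℓ t (dirac (σ t)))
      ≤ ((m : ℝ) + 1) / η * Real.log N
        + (1 / η) * Real.log (1 / (α ^ m * (1 - α) ^ (T - m - 1)))
        + η / 8 * L ^ 2 * T := by
  obtain ⟨T', rfl⟩ : ∃ T', T = T' + 1 := ⟨T - 1, by omega⟩
  have hm' : m ≤ T' := by omega
  have hNpos : (0:ℝ) < N := by exact_mod_cast hN
  have h1α : (0:ℝ) < 1 - α := by linarith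
  have hcard : ∀ t, ((E t).card : ℝ) ≤ N := by
    intro t
    have h1 := Finset.card_le_univ (E t)
    rw [Fintype.card_fin] at h1
    exact_mod_cast h1
  have hcardpos : ∀ t, 0 < ((E t).card : ℝ) := by
    intro t; exact_mod_cast (hE t).card_pos
  -- nonnegativity of weights
  have hwnn : ∀ t i, 0 ≤ w t i := by
    intro t
    induction t with
    | zero =>
      intro i; rw [hw0]
      split_ifs with h
      · positivity
      · exact le_rfl
    | succ t ih =>
      intro j; rw [hupd]
      by_cases h1 : j ∈ E (t+1)
      rw [if_pos h1]
      · have hS : ∀ (s : Finset (Fin N)), 0 ≤ ∑ i ∈ s, w t i * Real.exp (-η * ℓ t (dirac i)) :=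
          fun s => Finset.sum_nonneg fun i _ => mul_nonneg (ih i) (Real.exp_pos _).le
        have h3 : 0 ≤ (if j ∈ E t ∩ E (t+1) then w t j * Real.exp (-η * ℓ t (dirac j)) else 0) := by
          split_ifs
          · exact mul_nonneg (ih j) (Real.exp_pos _).le
          · exact le_rfl
        have hc := hcardpos (t+1)
        refine add_nonneg (add_nonneg ?_ ?_) (mul_nonneg h1α.le h3)
        · exact mul_nonneg (by positivity) (hS _)
        · exact mul_nonneg (div_nonneg hα.le hc.le) (hS _)
      · rw [if_neg h1]
  -- initial total weight
  have hW0 : ∑ k ∈ E 0, w 0 k = 1 := by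
    rw [Finset.sum_congr rfl (fun i hi => by rw [hw0, if_pos hi]), Finset.sum_const,
      nsmul_eq_mul]
    field_simp
  -- total weight recursion
  have hWrec : ∀ t, ∑ j ∈ E (t+1), w (t+1) j
      = ∑ i ∈ E t, w t i * Real.exp (-η * ℓ t (dirac i)) := by
    intro t
    have hiteq : ∑ j ∈ E (t+1), (if j ∈ E t ∩ E (t+1) then w t j * Real.exp (-η * ℓ t (dirac j)) else 0)
        = ∑ j ∈ E t ∩ E (t+1), w t j * Real.exp (-η * ℓ t (dirac j)) := by
      rw [Finset.sum_ite_mem]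
      congr 1
      ext j; simp only [Finset.mem_inter]; tauto
    have hcne : ((E (t+1)).card : ℝ) ≠ 0 := (hcardpos _).ne'
    have hsplit : ∑ i ∈ E t ∩ E (t+1), w t i * Real.exp (-η * ℓ t (dirac i))
        + ∑ i ∈ E t \ E (t+1), w t i * Real.exp (-η * ℓ t (dirac i))
        = ∑ i ∈ E t, w t i * Real.exp (-η * ℓ t (dirac i)) :=
      Finset.sum_inter_add_sum_sdiff _ _ _
    calc ∑ j ∈ E (t+1), w (t+1) j
        = ∑ j ∈ E (t+1), ((1 / ((E (t+1)).card : ℝ)) *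
              (∑ i ∈ E t \ E (t+1), w t i * Real.exp (-η * ℓ t (dirac i)))
            + (α / ((E (t+1)).card : ℝ)) *
              (∑ i ∈ E t ∩ E (t+1), w t i * Real.exp (-η * ℓ t (dirac i)))
            + (1 - α) * (if j ∈ E t ∩ E (t+1) then w t j * Real.exp (-η * ℓ t (dirac j)) else 0)) :=
          Finset.sum_congr rfl fun j hj => by rw [hupd, if_pos hj]
      _ = (E (t+1)).card • ((1 / ((E (t+1)).card : ℝ)) *
              (∑ i ∈ E t \ E (t+1), w t i * Real.exp (-η * ℓ t (dirac i)))
            + (α / ((E (t+1)).card : ℝ)) *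
              (∑ i ∈ E t ∩ E (t+1), w t i * Real.exp (-η * ℓ t (dirac i))))
            + (1 - α) * ∑ j ∈ E t ∩ E (t+1), w t j * Real.exp (-η * ℓ t (dirac j)) := by
          rw [Finset.sum_add_distrib, Finset.sum_const, ← Finset.mul_sum, hiteq]
      _ = ∑ i ∈ E t \ E (t+1), w t i * Real.exp (-η * ℓ t (dirac i))
            + ∑ i ∈ E t ∩ E (t+1), w t i * Real.exp (-η * ℓ t (dirac i)) := by
          rw [nsmul_eq_mul]; field_simp; ring
      _ = ∑ i ∈ E t, w t i * Real.exp (-η * ℓ t (dirac i)) := by rw [add_comm]; exact hsplit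
  -- predictions are convex weights
  have hpmem : ∀ t, ∀ i ∈ E t, p t i = w t i / (∑ k ∈ E t, w t k) := by
    intro t i hi; rw [hp, if_pos hi]
  have hpsum : ∀ t, ∑ i ∈ E t, p t i = 1 := by
    intro t
    rw [Finset.sum_congr rfl (hpmem t), ← Finset.sum_div, div_self (hpos t).ne']
  have hp0 : ∀ t, ∀ i ∈ E t, 0 ≤ p t i := by
    intro t i hi
    rw [hpmem t i hi]
    exact div_nonneg (hwnn t i) (hpos t).le
  have hprep : ∀ t, p t = ∑ i ∈ E t, p t i • dirac i := by
    intro t; funext k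
    rw [Finset.sum_apply]
    simp only [Pi.smul_apply, dirac, smul_eq_mul, mul_ite, mul_one, mul_zero]
    rw [Finset.sum_ite_eq (E t) k (fun i => p t i)]
    by_cases hk : k ∈ E t
    · rw [if_pos hk]
    · rw [if_neg hk, hp, if_neg hk, zero_div]
  have hjensen : ∀ t, ℓ t (p t) ≤ ∑ i ∈ E t, p t i * ℓ t (dirac i) := by
    intro t
    have h := (hconv t).map_sum_le (hp0 t) (hpsum t) (fun i _ => dirac_mem_stdSimplex i)
    rw [← hprep t] at h
    simpa [smul_eq_mul] using h
  -- per-step upper bound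
  have hstep : ∀ t, t < T' + 1 → Real.log (∑ k ∈ E (t+1), w (t+1) k) - Real.log (∑ k ∈ E t, w t k)
      ≤ -η * ℓ t (p t) + η ^ 2 * L ^ 2 / 8 := by
    intro t ht
    have hSpos : 0 < ∑ i ∈ E t, w t i * Real.exp (-η * ℓ t (dirac i)) := by
      obtain ⟨i, hi, hwi⟩ : ∃ i ∈ E t, 0 < w t i := by
        by_contra h
        push_neg at h
        have : ∑ k ∈ E t, w t k = 0 :=
          Finset.sum_eq_zero fun i hi => le_antisymm (h i hi) (hwnn t i)
        exact absurd (this ▸ hpos t) (lt_irrefl 0)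
      exact Finset.sum_pos' (fun j _ => mul_nonneg (hwnn t j) (Real.exp_pos _).le)
        ⟨i, hi, mul_pos hwi (Real.exp_pos _)⟩
    have hsum_eq : ∑ i ∈ E t, p t i * Real.exp (-η * ℓ t (dirac i))
        = (∑ i ∈ E t, w t i * Real.exp (-η * ℓ t (dirac i))) / (∑ k ∈ E t, w t k) := by
      rw [Finset.sum_congr rfl (fun i hi => by rw [hpmem t i hi, div_mul_eq_mul_div]),
        ← Finset.sum_div]
    have hlog : Real.log (∑ k ∈ E (t+1), w (t+1) k) - Real.log (∑ k ∈ E t, w t k)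
        = Real.log (∑ i ∈ E t, p t i * Real.exp (-η * ℓ t (dirac i))) := by
      rw [hsum_eq, hWrec t, Real.log_div hSpos.ne' (hpos t).ne']
    rw [hlog]
    have hh := hoeff_sum (E t) (p t) (fun i => ℓ t (dirac i)) η L hη.le hL (hp0 t) (hpsum t)
      (fun i hi => hbound t ht i hi)
    refine hh.trans ?_
    have hj := hjensen t
    have := mul_le_mul_of_nonneg_left hj hη.le
    linarith
  -- telescoping upper bound
  have htel : Real.log (∑ k ∈ E (T'+1), w (T'+1) k)
      ≤ -η * (∑ t ∈ Finset.range (T'+1), ℓ t (p t)) + ((T':ℝ)+1) * (η ^ 2 * L ^ 2 / 8) := by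
    have h1 : ∑ t ∈ Finset.range (T'+1),
        (Real.log (∑ k ∈ E (t+1), w (t+1) k) - Real.log (∑ k ∈ E t, w t k))
        = Real.log (∑ k ∈ E (T'+1), w (T'+1) k) - Real.log (∑ k ∈ E 0, w 0 k) :=
      Finset.sum_range_sub (fun t => Real.log (∑ k ∈ E t, w t k)) (T'+1)
    have h2 : ∑ t ∈ Finset.range (T'+1),
        (Real.log (∑ k ∈ E (t+1), w (t+1) k) - Real.log (∑ k ∈ E t, w t k))
        ≤ ∑ t ∈ Finset.range (T'+1), (-η * ℓ t (p t) + η ^ 2 * L ^ 2 / 8) :=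
      Finset.sum_le_sum fun t ht => hstep t (Finset.mem_range.1 ht)
    have h3 : ∑ t ∈ Finset.range (T'+1), (-η * ℓ t (p t) + η ^ 2 * L ^ 2 / 8)
        = -η * (∑ t ∈ Finset.range (T'+1), ℓ t (p t)) + ((T':ℝ)+1) * (η ^ 2 * L ^ 2 / 8) := by
      rw [Finset.sum_add_distrib, ← Finset.mul_sum, Finset.sum_const, Finset.card_range,
        nsmul_eq_mul]
      push_cast
      ring
    rw [hW0, Real.log_one, sub_zero] at h1
    rw [h1, h3] at h2
    exact h2
  -- lower bound machinery
  set c : ℕ → ℝ := fun s => if σ s = σ (s+1) then max (1-α) (α/(N:ℝ)) else α/(N:ℝ) with hcdef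
  have hcnn : ∀ s, 0 ≤ c s := by
    intro s
    simp only [hcdef]
    split_ifs
    · exact le_max_of_le_right (by positivity)
    · positivity
  have hstep_low : ∀ t, t + 1 < T' + 1 →
      c t * (w t (σ t) * Real.exp (-η * ℓ t (dirac (σ t)))) ≤ w (t+1) (σ (t+1)) := by
    intro t ht
    have hσ1 : σ (t+1) ∈ E (t+1) := hleg (t+1) ht
    have hσ0 : σ t ∈ E t := hleg t (by omega)
    rw [hupd t (σ (t+1)), if_pos hσ1]
    have hvnn : ∀ i : Fin N, 0 ≤ w t i * Real.exp (-η * ℓ t (dirac i)) :=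
      fun i => mul_nonneg (hwnn t i) (Real.exp_pos _).le
    have hS1nn : 0 ≤ ∑ i ∈ E t \ E (t+1), w t i * Real.exp (-η * ℓ t (dirac i)) :=
      Finset.sum_nonneg fun i _ => hvnn i
    have hS2nn : 0 ≤ ∑ i ∈ E t ∩ E (t+1), w t i * Real.exp (-η * ℓ t (dirac i)) :=
      Finset.sum_nonneg fun i _ => hvnn i
    have hitenn : 0 ≤ (if σ (t+1) ∈ E t ∩ E (t+1)
        then w t (σ (t+1)) * Real.exp (-η * ℓ t (dirac (σ (t+1)))) else 0) := by
      split_ifs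
      · exact hvnn _
      · exact le_rfl
    have hccard := hcardpos (t+1)
    have hcN := hcard (t+1)
    have hmid : σ t ∈ E (t+1) →
        (α/(N:ℝ)) * (w t (σ t) * Real.exp (-η * ℓ t (dirac (σ t))))
          ≤ (α / ((E (t+1)).card : ℝ)) * ∑ i ∈ E t ∩ E (t+1), w t i * Real.exp (-η * ℓ t (dirac i)) := by
      intro hmm
      have hone : w t (σ t) * Real.exp (-η * ℓ t (dirac (σ t)))
          ≤ ∑ i ∈ E t ∩ E (t+1), w t i * Real.exp (-η * ℓ t (dirac i)) :=
        Finset.single_le_sum (fun i _ => hvnn i) (Finset.mem_inter.2 ⟨hσ0, hmm⟩)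
      have hdiv : α/(N:ℝ) ≤ α/((E (t+1)).card : ℝ) := by
        have h9 := one_div_le_one_div_of_le (hcardpos (t+1)) (hcard (t+1))
        calc α/(N:ℝ) = α * (1/(N:ℝ)) := by ring
          _ ≤ α * (1/((E (t+1)).card : ℝ)) := mul_le_mul_of_nonneg_left h9 hα.le
          _ = α/((E (t+1)).card : ℝ) := by ring
      calc (α/(N:ℝ)) * (w t (σ t) * Real.exp (-η * ℓ t (dirac (σ t))))
          ≤ (α/((E (t+1)).card : ℝ)) * (w t (σ t) * Real.exp (-η * ℓ t (dirac (σ t)))) :=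
            mul_le_mul_of_nonneg_right hdiv (hvnn _)
        _ ≤ (α/((E (t+1)).card : ℝ)) * ∑ i ∈ E t ∩ E (t+1), w t i * Real.exp (-η * ℓ t (dirac i)) :=
            mul_le_mul_of_nonneg_left hone (div_nonneg hα.le hccard.le)
    by_cases hs : σ t = σ (t+1)
    · have hcval : c t = max (1-α) (α/(N:ℝ)) := by simp [hcdef, hs]
      rw [hcval, max_mul_of_nonneg _ _ (hvnn (σ t))]
      have hin : σ (t+1) ∈ E t ∩ E (t+1) := Finset.mem_inter.2 ⟨hs ▸ hσ0, hσ1⟩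
      rw [if_pos hin, ← hs]
      apply max_le
      · have ha := mul_nonneg (one_div_nonneg.2 hccard.le :
            (0:ℝ) ≤ 1 / ((E (t+1)).card : ℝ)) hS1nn
        have hb := mul_nonneg (div_nonneg hα.le hccard.le) hS2nn
        linarith
      · have := hmid (hs ▸ hσ1)
        have ha := mul_nonneg (one_div_nonneg.2 hccard.le :
            (0:ℝ) ≤ 1 / ((E (t+1)).card : ℝ)) hS1nn
        have hc2 := mul_nonneg h1α.le (hvnn (σ t))
        linarith
    · have hcval : c t = α/(N:ℝ) := by simp [hcdef, hs]
      rw [hcval]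
      have h3nn : 0 ≤ (1 - α) * (if σ (t+1) ∈ E t ∩ E (t+1)
          then w t (σ (t+1)) * Real.exp (-η * ℓ t (dirac (σ (t+1)))) else 0) :=
        mul_nonneg h1α.le hitenn
      by_cases hm2 : σ t ∈ E (t+1)
      · have := hmid hm2
        have ha := mul_nonneg (one_div_nonneg.2 hccard.le :
            (0:ℝ) ≤ 1 / ((E (t+1)).card : ℝ)) hS1nn
        linarith
      · have hsd : σ t ∈ E t \ E (t+1) := Finset.mem_sdiff.2 ⟨hσ0, hm2⟩
        have hone : w t (σ t) * Real.exp (-η * ℓ t (dirac (σ t)))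
            ≤ ∑ i ∈ E t \ E (t+1), w t i * Real.exp (-η * ℓ t (dirac i)) :=
          Finset.single_le_sum (fun i _ => hvnn i) hsd
        have hdiv : α/(N:ℝ) ≤ 1/((E (t+1)).card : ℝ) := by
          have h9 := one_div_le_one_div_of_le (hcardpos (t+1)) (hcard (t+1))
          have h8 : α/(N:ℝ) ≤ 1/(N:ℝ) := by
            have : (0:ℝ) < (N:ℝ)⁻¹ := by positivity
            rw [div_eq_mul_inv, div_eq_mul_inv, one_mul]
            nlinarith
          exact h8.trans h9
        have hchain : (α/(N:ℝ)) * (w t (σ t) * Real.exp (-η * ℓ t (dirac (σ t))))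
            ≤ (1/((E (t+1)).card : ℝ)) * ∑ i ∈ E t \ E (t+1), w t i * Real.exp (-η * ℓ t (dirac i)) := by
          calc (α/(N:ℝ)) * (w t (σ t) * Real.exp (-η * ℓ t (dirac (σ t))))
              ≤ (1/((E (t+1)).card : ℝ)) * (w t (σ t) * Real.exp (-η * ℓ t (dirac (σ t)))) :=
                mul_le_mul_of_nonneg_right hdiv (hvnn _)
            _ ≤ _ := mul_le_mul_of_nonneg_left hone (one_div_nonneg.2 hccard.le)
        have hb := mul_nonneg (div_nonneg hα.le hccard.le) hS2nn
        linarith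
  -- inductive lower bound on the weight of the compound expert
  have key : ∀ t, t < T' + 1 →
      (1/(N:ℝ)) * Real.exp (-η * ∑ s ∈ Finset.range t, ℓ s (dirac (σ s)))
        * ∏ s ∈ Finset.range t, c s ≤ w t (σ t) := by
    intro t
    induction t with
    | zero =>
      intro _
      simp only [Finset.range_zero, Finset.sum_empty, Finset.prod_empty, mul_one, mul_zero,
        Real.exp_zero]
      rw [hw0, if_pos (hleg 0 (by omega))]
      exact one_div_le_one_div_of_le (hcardpos 0) (hcard 0)
    | succ t ih =>
      intro ht
      have hih := ih (by omega)
      have hlow := hstep_low t ht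
      calc (1/(N:ℝ)) * Real.exp (-η * ∑ s ∈ Finset.range (t+1), ℓ s (dirac (σ s)))
            * ∏ s ∈ Finset.range (t+1), c s
          = c t * (((1/(N:ℝ)) * Real.exp (-η * ∑ s ∈ Finset.range t, ℓ s (dirac (σ s)))
              * ∏ s ∈ Finset.range t, c s) * Real.exp (-η * ℓ t (dirac (σ t)))) := by
            rw [Finset.sum_range_succ, Finset.prod_range_succ,
              show -η * ((∑ s ∈ Finset.range t, ℓ s (dirac (σ s))) + ℓ t (dirac (σ t)))
                = -η * (∑ s ∈ Finset.range t, ℓ s (dirac (σ s))) + -η * ℓ t (dirac (σ t)) by ring,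
              Real.exp_add]
            ring
        _ ≤ c t * (w t (σ t) * Real.exp (-η * ℓ t (dirac (σ t)))) := by
            exact mul_le_mul_of_nonneg_left
              (mul_le_mul_of_nonneg_right hih (Real.exp_pos _).le) (hcnn t)
        _ ≤ w (t+1) (σ (t+1)) := hlow
  -- counting switches
  set k : ℕ := ((Finset.range T').filter (fun s => ¬ σ s = σ (s+1))).card with hkdef
  have hkm : k ≤ m := by
    refine le_trans (le_of_eq ?_) hsw
    apply Finset.card_bij (fun s _ => s + 1)
    · intro a ha
      simp only [Finset.mem_filter, Finset.mem_range] at ha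
      simp only [Finset.mem_filter, Finset.mem_Ico]
      exact ⟨⟨by omega, by omega⟩, by simpa using ha.2⟩
    · intro a ha b hb hab
      omega
    · intro b hb
      simp only [Finset.mem_filter, Finset.mem_Ico] at hb
      refine ⟨b - 1, ?_, by omega⟩
      simp only [Finset.mem_filter, Finset.mem_range]
      constructor
      · omega
      · have : b - 1 + 1 = b := by omega
        rw [this]
        exact hb.2
  -- product lower bound
  have hprod : (α/(N:ℝ))^m * (1-α)^(T'-m) ≤ ∏ s ∈ Finset.range T', c s := by
    have hprodeq : ∏ s ∈ Finset.range T', c s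
        = max (1-α) (α/(N:ℝ)) ^ ((Finset.range T').filter (fun s => σ s = σ (s+1))).card
          * (α/(N:ℝ)) ^ k := by
      simp only [hcdef]
      rw [Finset.prod_ite, Finset.prod_const, Finset.prod_const]
    have hcards : ((Finset.range T').filter (fun s => σ s = σ (s+1))).card = T' - k := by
      have := Finset.card_filter_add_card_filter_not
        (s := Finset.range T') (p := fun s => σ s = σ (s+1))
      rw [Finset.card_range] at this
      omega
    rw [hprodeq, hcards]
    have hkT : k ≤ T' := by
      have := Finset.card_filter_le (Finset.range T') (fun s => ¬ σ s = σ (s+1))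
      rw [Finset.card_range] at this
      exact hkdef ▸ this
    have hanN : (0:ℝ) ≤ α/(N:ℝ) := by positivity
    have hb1 : α/(N:ℝ) ≤ max (1-α) (α/(N:ℝ)) := le_max_right _ _
    have hb2 : 1-α ≤ max (1-α) (α/(N:ℝ)) := le_max_left _ _
    calc (α/(N:ℝ))^m * (1-α)^(T'-m)
        = ((α/(N:ℝ))^(m-k) * (1-α)^(T'-m)) * (α/(N:ℝ))^k := by
          have h7 : (α/(N:ℝ))^m = (α/(N:ℝ))^(m-k) * (α/(N:ℝ))^k := by
            rw [← pow_add, Nat.sub_add_cancel hkm]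
          rw [h7]
          ring
      _ ≤ (max (1-α) (α/(N:ℝ)) ^ (m-k) * max (1-α) (α/(N:ℝ)) ^ (T'-m)) * (α/(N:ℝ))^k := by
          apply mul_le_mul_of_nonneg_right _ (by positivity)
          exact mul_le_mul (pow_le_pow_left₀ hanN hb1 _) (pow_le_pow_left₀ h1α.le hb2 _)
            (by positivity) (by positivity)
      _ = max (1-α) (α/(N:ℝ)) ^ (T'-k) * (α/(N:ℝ))^k := by
          rw [← pow_add, show (m-k) + (T'-m) = T'-k by omega]
  -- lower bound on the final total weight
  have hWlow : (1/(N:ℝ)) * Real.exp (-η * ∑ s ∈ Finset.range (T'+1), ℓ s (dirac (σ s)))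
      * ((α/(N:ℝ))^m * (1-α)^(T'-m)) ≤ ∑ kk ∈ E (T'+1), w (T'+1) kk := by
    have h1 := key T' (by omega)
    have h2 : w T' (σ T') * Real.exp (-η * ℓ T' (dirac (σ T')))
        ≤ ∑ kk ∈ E (T'+1), w (T'+1) kk := by
      rw [hWrec T']
      exact Finset.single_le_sum (f := fun i => w T' i * Real.exp (-η * ℓ T' (dirac i)))
        (fun i _ => mul_nonneg (hwnn T' i) (Real.exp_pos _).le) (hleg T' (by omega))
    calc (1/(N:ℝ)) * Real.exp (-η * ∑ s ∈ Finset.range (T'+1), ℓ s (dirac (σ s)))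
          * ((α/(N:ℝ))^m * (1-α)^(T'-m))
        ≤ (1/(N:ℝ)) * Real.exp (-η * ∑ s ∈ Finset.range (T'+1), ℓ s (dirac (σ s)))
          * ∏ s ∈ Finset.range T', c s := by
          apply mul_le_mul_of_nonneg_left hprod (by positivity)
      _ = ((1/(N:ℝ)) * Real.exp (-η * ∑ s ∈ Finset.range T', ℓ s (dirac (σ s)))
          * ∏ s ∈ Finset.range T', c s) * Real.exp (-η * ℓ T' (dirac (σ T'))) := by
          rw [Finset.sum_range_succ,
            show -η * ((∑ s ∈ Finset.range T', ℓ s (dirac (σ s))) + ℓ T' (dirac (σ T')))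
              = -η * (∑ s ∈ Finset.range T', ℓ s (dirac (σ s))) + -η * ℓ T' (dirac (σ T')) by ring,
            Real.exp_add]
          ring
      _ ≤ w T' (σ T') * Real.exp (-η * ℓ T' (dirac (σ T'))) :=
          mul_le_mul_of_nonneg_right h1 (Real.exp_pos _).le
      _ ≤ ∑ kk ∈ E (T'+1), w (T'+1) kk := h2
  -- take logarithms and combine
  have hlogW : Real.log ((1/(N:ℝ)) * Real.exp (-η * ∑ s ∈ Finset.range (T'+1), ℓ s (dirac (σ s)))
      * ((α/(N:ℝ))^m * (1-α)^(T'-m))) ≤ Real.log (∑ kk ∈ E (T'+1), w (T'+1) kk) :=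
    Real.log_le_log (by positivity) hWlow
  have hlogexpand : Real.log ((1/(N:ℝ)) * Real.exp (-η * ∑ s ∈ Finset.range (T'+1), ℓ s (dirac (σ s)))
      * ((α/(N:ℝ))^m * (1-α)^(T'-m)))
      = -Real.log N + (-η * ∑ s ∈ Finset.range (T'+1), ℓ s (dirac (σ s)))
        + ((m:ℝ) * (Real.log α - Real.log N) + ((T':ℝ)-(m:ℝ)) * Real.log (1-α)) := by
    rw [Real.log_mul (by positivity) (by positivity), Real.log_mul (by positivity) (by positivity),
      Real.log_mul (by positivity) (by positivity), Real.log_exp, Real.log_pow, Real.log_pow,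
      one_div, Real.log_inv, Real.log_div hα.ne' hNpos.ne']
    have hTm : ((T' - m : ℕ) : ℝ) = (T':ℝ) - (m:ℝ) := by
      push_cast [Nat.cast_sub hm']
      ring
    rw [hTm]
    try ring
  rw [hlogexpand] at hlogW
  -- final algebra
  have hsub : ∑ t ∈ Finset.range (T'+1), (ℓ t (p t) - ℓ t (dirac (σ t)))
      = (∑ t ∈ Finset.range (T'+1), ℓ t (p t)) - ∑ t ∈ Finset.range (T'+1), ℓ t (dirac (σ t)) :=
    Finset.sum_sub_distrib _ _
  have hlog1 : Real.log (1 / (α ^ m * (1 - α) ^ (T' + 1 - m - 1)))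
      = -((m:ℝ) * Real.log α + ((T':ℝ)-(m:ℝ)) * Real.log (1-α)) := by
    rw [show T' + 1 - m - 1 = T' - m by omega, one_div, Real.log_inv,
      Real.log_mul (by positivity) (by positivity), Real.log_pow, Real.log_pow]
    have hTm : ((T' - m : ℕ) : ℝ) = (T':ℝ) - (m:ℝ) := by
      push_cast [Nat.cast_sub hm']
      ring
    rw [hTm]
  rw [hsub, hlog1]
  have hmain : η * ((∑ t ∈ Finset.range (T'+1), ℓ t (p t))
      - ∑ t ∈ Finset.range (T'+1), ℓ t (dirac (σ t)))
      ≤ ((m:ℝ)+1) * Real.log N - ((m:ℝ) * Real.log α + ((T':ℝ)-(m:ℝ)) * Real.log (1-α))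
        + η * (η/8 * L^2 * ((T':ℝ)+1)) := by
    nlinarith [hlogW.trans htel]
  have hfinal : (∑ t ∈ Finset.range (T'+1), ℓ t (p t))
      - ∑ t ∈ Finset.range (T'+1), ℓ t (dirac (σ t))
      ≤ (((m:ℝ)+1) * Real.log N - ((m:ℝ) * Real.log α + ((T':ℝ)-(m:ℝ)) * Real.log (1-α))
        + η * (η/8 * L^2 * ((T':ℝ)+1))) / η := by
    rw [le_div_iff₀ hη]
    nlinarith [hmain]
  refine hfinal.trans (le_of_eq ?_)
  push_cast
  field_simp
  ring
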